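/- Let X₁ and X₂ be homeomorphisms of ℝ² onto itself, each preserving two-dimensional Lebesgue measure, let δ := sup_{z ∈ ℝ²} |X₁(z) − X₂(z)|, and assume 0 < δ < e^{−1}. Let U ⊆ ℝ² be measurable with finite Lebesgue measure. Then there exists a constant C > 0, depending only on the Lebesgue measure of U, such that for every x ∈ ℝ²: ∫_U |K(x − X₁(z)) − K(x − X₂(z))| dz ≤ −C · δ · log δ. -/

import Mathlib

open MeasureTheory

noncomputable section

abbrev E2 : Type := EuclideanSpace ℝ (Fin 2)

/-- The planar Biot–Savart kernel `K(z) = z⊥ / (2π|z|²)`, where `z⊥ = (-z₂, z₁)`.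
(With the junk-value convention `(0 : ℝ)⁻¹ = 0`, this gives `K 0 = 0`.) -/
def K (z : E2) : E2 :=
  (2 * Real.pi * ‖z‖ ^ 2)⁻¹ • (WithLp.equiv 2 (Fin 2 → ℝ)).symm ![-(z 1), z 0]

namespace KFlowAux

open Metric Set ENNReal

def Jmap (v : E2) : E2 := (WithLp.equiv 2 (Fin 2 → ℝ)).symm ![-(v 1), v 0]

lemma Jmap_norm (v : E2) : ‖Jmap v‖ = ‖v‖ := by
  simp [Jmap, EuclideanSpace.norm_eq, Fin.sum_univ_two, WithLp.equiv_symm_apply, PiLp.toLp_apply]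
  ring_nf

lemma Jmap_smul (c : ℝ) (v : E2) : Jmap (c • v) = c • Jmap v := by
  ext i
  fin_cases i <;> simp [Jmap, WithLp.equiv_symm_apply, PiLp.toLp_apply]

lemma Jmap_sub (a b : E2) : Jmap (a - b) = Jmap a - Jmap b := by
  ext i
  fin_cases i <;> simp [Jmap, WithLp.equiv_symm_apply, PiLp.toLp_apply] <;> ring

lemma K_eq (z : E2) : K z = (2 * Real.pi)⁻¹ • Jmap ((‖z‖ ^ 2)⁻¹ • z) := by
  rw [Jmap_smul, smul_smul, K, Jmap, mul_inv]

lemma norm_K (z : E2) : ‖K z‖ = (2 * Real.pi * ‖z‖)⁻¹ := by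
  rcases eq_or_ne z 0 with rfl | hz
  · simp [K]
  · rw [K_eq, norm_smul, Jmap_norm, norm_smul]
    have h : ‖z‖ ≠ 0 := norm_ne_zero_iff.2 hz
    rw [Real.norm_eq_abs, Real.norm_eq_abs, abs_of_nonneg (by positivity),
      abs_of_nonneg (by positivity), mul_inv, sq]
    field_simp

lemma norm_K_sub (a b : E2) (ha : a ≠ 0) (hb : b ≠ 0) :
    ‖K a - K b‖ = ‖a - b‖ / (2 * Real.pi * (‖a‖ * ‖b‖)) := by
  have hna : ‖a‖ ≠ 0 := norm_ne_zero_iff.2 ha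
  have hnb : ‖b‖ ≠ 0 := norm_ne_zero_iff.2 hb
  rw [K_eq, K_eq, ← smul_sub, ← Jmap_sub, norm_smul, Jmap_norm]
  have key := dist_div_norm_sq_smul (F := E2) ha hb 1
  simp only [one_div, one_pow] at key
  rw [dist_eq_norm, dist_eq_norm] at key
  simp only [inv_pow] at key
  rw [key, Real.norm_eq_abs, abs_of_nonneg (by positivity)]
  field_simp

/-- Volume of a closed ball in the plane. -/
lemma volume_closedBall_E2 (x : E2) {r : ℝ} (hr : 0 ≤ r) :
    volume (closedBall x r) = ENNReal.ofReal (Real.pi * r ^ 2) := by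
  rw [EuclideanSpace.volume_closedBall]
  have h2 : (Fintype.card (Fin 2) : ℝ) = 2 := by simp
  rw [show (Fintype.card (Fin 2)) = 2 from by simp]
  have : Real.sqrt Real.pi ^ 2 / Real.Gamma ((2 : ℕ) / 2 + 1) = Real.pi := by
    rw [Real.sq_sqrt Real.pi_pos.le]
    norm_num [Real.Gamma_two]
  rw [this, ← ENNReal.ofReal_pow hr, ← ENNReal.ofReal_mul (by positivity)]
  ring_nf

/-- First radial bound: `∫_{|w-x| ≤ r} (2π |w-x|)⁻¹ dw ≤ 2r`. -/
lemma shell_bound_one (x : E2) {r : ℝ} (hr : 0 < r) :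
    ∫⁻ w in closedBall x r, ENNReal.ofReal (2 * Real.pi * dist w x)⁻¹ ≤
      ENNReal.ofReal (2 * r) := by
  set f : E2 → ℝ≥0∞ := fun w => ENNReal.ofReal (2 * Real.pi * dist w x)⁻¹ with hf
  set S : ℕ → Set E2 :=
    fun n => closedBall x (r * 2⁻¹ ^ n) \ closedBall x (r * 2⁻¹ ^ (n + 1)) with hS
  have hcover : closedBall x r ⊆ {x} ∪ ⋃ n, S n := by
    intro w hw
    rcases eq_or_ne w x with rfl | hne
    · exact Or.inl rfl
    · have hd : 0 < dist w x := dist_pos.2 hne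
      have hwr : dist w x ≤ r := mem_closedBall.1 hw
      have hex : ∃ n : ℕ, r * 2⁻¹ ^ (n + 1) < dist w x := by
        obtain ⟨n, hn⟩ := exists_pow_lt_of_lt_one (div_pos hd hr)
          (by norm_num : (2 : ℝ)⁻¹ < 1)
        refine ⟨n, ?_⟩
        have h1 : (2 : ℝ)⁻¹ ^ (n + 1) ≤ 2⁻¹ ^ n :=
          pow_le_pow_of_le_one (by norm_num) (by norm_num) (Nat.le_succ n)
        have h2 := (lt_div_iff₀ hr).1 hn
        nlinarith
      classical
      right
      refine Set.mem_iUnion.2 ⟨Nat.find hex, ?_, ?_⟩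
      · rw [mem_closedBall]
        rcases Nat.eq_zero_or_pos (Nat.find hex) with h0 | h0
        · rw [h0]; simpa using hwr
        · have hmin := Nat.find_min hex (Nat.sub_lt h0 one_pos)
          push_neg at hmin
          have he : Nat.find hex - 1 + 1 = Nat.find hex := by omega
          rwa [he] at hmin
      · rw [mem_closedBall]
        push_neg
        exact Nat.find_spec hex
  have hsingle : ∫⁻ w in ({x} : Set E2), f w = 0 := by
    rw [Measure.restrict_eq_zero.2 (measure_singleton x), lintegral_zero_measure]
  have hshell : ∀ n : ℕ, ∫⁻ w in S n, f w ≤ ENNReal.ofReal (r * 2⁻¹ ^ n) := by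
    intro n
    have hrn : 0 < r * 2⁻¹ ^ (n + 1) := by positivity
    have hb : ∀ w ∈ S n, f w ≤ ENNReal.ofReal (2 * Real.pi * (r * 2⁻¹ ^ (n + 1)))⁻¹ := by
      intro w hw
      have h1 : r * 2⁻¹ ^ (n + 1) < dist w x := by
        have := hw.2; rw [mem_closedBall] at this; push_neg at this; linarith
      exact ENNReal.ofReal_le_ofReal (by
        apply inv_anti₀ (by positivity)
        nlinarith [Real.pi_pos])
    calc ∫⁻ w in S n, f w
        ≤ ∫⁻ _ in S n, ENNReal.ofReal (2 * Real.pi * (r * 2⁻¹ ^ (n + 1)))⁻¹ :=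
          setLIntegral_mono' (measurableSet_closedBall.diff measurableSet_closedBall) hb
      _ = ENNReal.ofReal (2 * Real.pi * (r * 2⁻¹ ^ (n + 1)))⁻¹ * volume (S n) :=
          setLIntegral_const _ _
      _ ≤ ENNReal.ofReal (2 * Real.pi * (r * 2⁻¹ ^ (n + 1)))⁻¹ *
            ENNReal.ofReal (Real.pi * (r * 2⁻¹ ^ n) ^ 2) := by
          gcongr
          rw [← volume_closedBall_E2 x (by positivity)]
          exact measure_mono (Set.diff_subset.trans (subset_refl _))
      _ = ENNReal.ofReal (r * 2⁻¹ ^ n) := by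
          rw [← ENNReal.ofReal_mul (by positivity)]
          congr 1
          have hπ := Real.pi_pos
          have h2 : (2:ℝ)⁻¹ ^ (n+1) = 2⁻¹ ^ n * 2⁻¹ := pow_succ _ _
          rw [h2]
          have hq : (0:ℝ) < 2⁻¹ ^ n := by positivity
          field_simp
  calc ∫⁻ w in closedBall x r, f w
      ≤ ∫⁻ w in ({x} ∪ ⋃ n, S n : Set E2), f w := lintegral_mono_set hcover
    _ ≤ (∫⁻ w in ({x} : Set E2), f w) + ∫⁻ w in (⋃ n, S n), f w := lintegral_union_le _ _ _
    _ ≤ (0 : ℝ≥0∞) + ∑' n, ∫⁻ w in S n, f w := by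
        rw [hsingle]; exact add_le_add le_rfl (lintegral_iUnion_le _ _)
    _ ≤ ∑' n, ENNReal.ofReal (r * 2⁻¹ ^ n) := by
        rw [zero_add]; exact ENNReal.tsum_le_tsum hshell
    _ = ENNReal.ofReal (2 * r) := by
        have h1 : ∀ n : ℕ, ENNReal.ofReal (r * 2⁻¹ ^ n) =
            ENNReal.ofReal r * (2 : ℝ≥0∞)⁻¹ ^ n := by
          intro n
          rw [ENNReal.ofReal_mul hr.le, ENNReal.ofReal_pow (by norm_num)]
          congr 2
          rw [ENNReal.ofReal_inv_of_pos (by norm_num)]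
          norm_num
        simp_rw [h1]
        rw [ENNReal.tsum_mul_left, ENNReal.tsum_geometric, ENNReal.one_sub_inv_two, inv_inv,
          ENNReal.ofReal_mul (by norm_num)]
        rw [mul_comm]
        norm_num

/-- Second radial bound: `∫_{2δ < |w-x| ≤ 1} |w-x|⁻² dw ≤ (N+1)·4π` when `2δ·2^(N+1) ≥ 1`. -/
lemma shell_bound_two (x : E2) {δ : ℝ} (hδ : 0 < δ) (N : ℕ)
    (hN : 1 ≤ 2 * δ * 2 ^ (N + 1)) :
    ∫⁻ w in (closedBall x 1 \ closedBall x (2 * δ)),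
      ENNReal.ofReal ((dist w x) ^ 2)⁻¹ ≤ (N + 1 : ℕ) * ENNReal.ofReal (4 * Real.pi) := by
  set f : E2 → ℝ≥0∞ := fun w => ENNReal.ofReal ((dist w x) ^ 2)⁻¹ with hf
  set S : ℕ → Set E2 := fun n =>
    (closedBall x (2 * δ * 2 ^ (n + 1)) \ closedBall x (2 * δ * 2 ^ n)) ∩ closedBall x 1
    with hS
  have hcover : closedBall x 1 \ closedBall x (2 * δ) ⊆ ⋃ n, S n := by
    intro w hw
    have hw1 : dist w x ≤ 1 := mem_closedBall.1 hw.1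
    have hw2 : 2 * δ < dist w x := by
      have := hw.2; rw [mem_closedBall] at this; push_neg at this; exact this
    have hex : ∃ n : ℕ, dist w x ≤ 2 * δ * 2 ^ (n + 1) := ⟨N, le_trans hw1 hN⟩
    classical
    refine Set.mem_iUnion.2 ⟨Nat.find hex, ⟨⟨Nat.find_spec hex, ?_⟩, mem_closedBall.2 hw1⟩⟩
    rw [mem_closedBall]
    push_neg
    rcases Nat.eq_zero_or_pos (Nat.find hex) with h0 | h0
    · rw [h0]; simpa using hw2
    · have hmin := Nat.find_min hex (Nat.sub_lt h0 one_pos)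
      push_neg at hmin
      have he : Nat.find hex - 1 + 1 = Nat.find hex := by omega
      rwa [he] at hmin
  have hshell : ∀ n : ℕ, ∫⁻ w in S n, f w ≤
      (if n ≤ N then ENNReal.ofReal (4 * Real.pi) else 0) := by
    intro n
    by_cases hn : n ≤ N
    · rw [if_pos hn]
      have hb : ∀ w ∈ S n, f w ≤ ENNReal.ofReal ((2 * δ * 2 ^ n) ^ 2)⁻¹ := by
        intro w hw
        have h1 : 2 * δ * 2 ^ n < dist w x := by
          have := hw.1.2; rw [mem_closedBall] at this; push_neg at this; exact this
        exact ENNReal.ofReal_le_ofReal (by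
          apply inv_anti₀ (by positivity)
          have h2 : (0:ℝ) < 2 * δ * 2 ^ n := by positivity
          nlinarith)
      have hmeas : MeasurableSet (S n) :=
        ((measurableSet_closedBall.diff measurableSet_closedBall).inter
          measurableSet_closedBall)
      calc ∫⁻ w in S n, f w
          ≤ ∫⁻ _ in S n, ENNReal.ofReal ((2 * δ * 2 ^ n) ^ 2)⁻¹ :=
            setLIntegral_mono' hmeas hb
        _ = ENNReal.ofReal ((2 * δ * 2 ^ n) ^ 2)⁻¹ * volume (S n) := setLIntegral_const _ _
        _ ≤ ENNReal.ofReal ((2 * δ * 2 ^ n) ^ 2)⁻¹ *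
              ENNReal.ofReal (Real.pi * (2 * δ * 2 ^ (n + 1)) ^ 2) := by
            gcongr
            rw [← volume_closedBall_E2 x (by positivity)]
            exact measure_mono (fun w hw => hw.1.1)
        _ = ENNReal.ofReal (4 * Real.pi) := by
            rw [← ENNReal.ofReal_mul (by positivity)]
            congr 1
            have h2 : (2:ℝ) ^ (n+1) = 2 ^ n * 2 := pow_succ _ _
            have hq : (0:ℝ) < 2 * δ * 2 ^ n := by positivity
            rw [h2]
            field_simp
            ring
    · rw [if_neg hn]
      have hempty : S n = ∅ := by
        ext w
        simp only [hS, Set.mem_inter_iff, Set.mem_diff, mem_closedBall, Set.mem_empty_iff_false,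
          iff_false]
        rintro ⟨⟨-, h2⟩, h3⟩
        push_neg at h2
        have hNn : N + 1 ≤ n := by omega
        have hmono : (2:ℝ) ^ (N + 1) ≤ 2 ^ n :=
          pow_le_pow_right₀ (by norm_num) hNn
        have : (1:ℝ) ≤ 2 * δ * 2 ^ n := le_trans hN (by nlinarith)
        linarith
      rw [hempty]
      simp
  calc ∫⁻ w in (closedBall x 1 \ closedBall x (2 * δ)), f w
      ≤ ∫⁻ w in (⋃ n, S n), f w := lintegral_mono_set hcover
    _ ≤ ∑' n, ∫⁻ w in S n, f w := lintegral_iUnion_le _ _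
    _ ≤ ∑' n, (if n ≤ N then ENNReal.ofReal (4 * Real.pi) else 0) :=
        ENNReal.tsum_le_tsum hshell
    _ = (N + 1 : ℕ) * ENNReal.ofReal (4 * Real.pi) := by
        rw [tsum_eq_sum (s := Finset.range (N + 1))
          (by intro n hn; rw [if_neg]; simpa [Nat.lt_succ_iff] using hn)]
        rw [Finset.sum_ite_of_true (by intro n hn; simpa [Nat.lt_succ_iff] using hn)]
        simp [Finset.sum_const, Finset.card_range, nsmul_eq_mul]

def F1 (x : E2) (δ : ℝ) : E2 → ℝ≥0∞ := fun w =>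
  (closedBall x (2 * δ)).indicator (fun w => ENNReal.ofReal (2 * Real.pi * dist w x)⁻¹) w +
  (closedBall x 1 \ closedBall x (2 * δ)).indicator
    (fun w => ENNReal.ofReal (δ / Real.pi) * ENNReal.ofReal ((dist w x) ^ 2)⁻¹) w

def F2 (x : E2) (δ : ℝ) : E2 → ℝ≥0∞ := fun w =>
  (closedBall x (3 * δ)).indicator (fun w => ENNReal.ofReal (2 * Real.pi * dist w x)⁻¹) w

lemma measurable_base (x : E2) : Measurable fun w : E2 => ENNReal.ofReal (2 * Real.pi * dist w x)⁻¹ := by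
  apply ENNReal.measurable_ofReal.comp
  exact ((measurable_const.mul (measurable_dist.comp
    (measurable_id.prodMk measurable_const)))).inv

lemma measurable_base2 (x : E2) : Measurable fun w : E2 => ENNReal.ofReal ((dist w x) ^ 2)⁻¹ := by
  apply ENNReal.measurable_ofReal.comp
  exact (((measurable_dist.comp (measurable_id.prodMk measurable_const))).pow_const 2).inv

lemma measurable_F1 (x : E2) (δ : ℝ) : Measurable (F1 x δ) := by
  apply Measurable.add
  · exact (measurable_base x).indicator measurableSet_closedBall
  · exact (measurable_const.mul (measurable_base2 x)).indicator
      (measurableSet_closedBall.diff measurableSet_closedBall)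

lemma measurable_F2 (x : E2) (δ : ℝ) : Measurable (F2 x δ) :=
  (measurable_base x).indicator measurableSet_closedBall

/-- The pointwise estimate. -/
lemma pointwise_bound (x w₁ w₂ : E2) {δ : ℝ} (hδ : 0 < δ) (h12 : ‖w₁ - w₂‖ ≤ δ) :
    ENNReal.ofReal ‖K (x - w₁) - K (x - w₂)‖ ≤
      F1 x δ w₁ + F2 x δ w₂ + ENNReal.ofReal (δ / Real.pi) := by
  have hπ := Real.pi_pos
  set a := x - w₁ with ha
  set b := x - w₂ with hb
  have hab : ‖a - b‖ ≤ δ := by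
    have : a - b = w₂ - w₁ := by rw [ha, hb]; abel
    rw [this, norm_sub_rev]; exact h12
  have hd1 : dist w₁ x = ‖a‖ := by rw [dist_eq_norm, ha, norm_sub_rev]
  have hd2 : dist w₂ x = ‖b‖ := by rw [dist_eq_norm, hb, norm_sub_rev]
  by_cases h1 : ‖a‖ ≤ 2 * δ
  · -- near region
    have hbnorm : ‖b‖ ≤ 3 * δ := by
      have : ‖b‖ ≤ ‖a‖ + ‖a - b‖ := by
        have h := norm_sub_le a (a - b)
        have he : a - (a - b) = b := by abel
        rwa [he] at h
      linarith
    have hKa : ‖K a - K b‖ ≤ (2 * Real.pi * ‖a‖)⁻¹ + (2 * Real.pi * ‖b‖)⁻¹ := by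
      calc ‖K a - K b‖ ≤ ‖K a‖ + ‖K b‖ := norm_sub_le _ _
        _ = _ := by rw [norm_K, norm_K]
    calc ENNReal.ofReal ‖K a - K b‖
        ≤ ENNReal.ofReal ((2 * Real.pi * ‖a‖)⁻¹ + (2 * Real.pi * ‖b‖)⁻¹) :=
          ENNReal.ofReal_le_ofReal hKa
      _ = ENNReal.ofReal (2 * Real.pi * ‖a‖)⁻¹ + ENNReal.ofReal (2 * Real.pi * ‖b‖)⁻¹ :=
          ENNReal.ofReal_add (by positivity) (by positivity)
      _ ≤ F1 x δ w₁ + F2 x δ w₂ + ENNReal.ofReal (δ / Real.pi) := by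
          have hm1 : w₁ ∈ closedBall x (2 * δ) := by rw [mem_closedBall, hd1]; exact h1
          have hm2 : w₂ ∈ closedBall x (3 * δ) := by rw [mem_closedBall, hd2]; exact hbnorm
          have e1 : ENNReal.ofReal (2 * Real.pi * ‖a‖)⁻¹ ≤ F1 x δ w₁ := by
            rw [F1]
            refine le_trans ?_ le_self_add
            rw [Set.indicator_of_mem hm1, hd1]
          have e2 : ENNReal.ofReal (2 * Real.pi * ‖b‖)⁻¹ ≤ F2 x δ w₂ := by
            rw [F2, Set.indicator_of_mem hm2, hd2]
          exact le_trans (add_le_add e1 e2) le_self_add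
  · -- far region
    push_neg at h1
    have hapos : 0 < ‖a‖ := lt_trans (by positivity) h1
    have hane : a ≠ 0 := norm_pos_iff.1 hapos
    have hbnorm : ‖a‖ - δ ≤ ‖b‖ := by
      have h3 : ‖a‖ ≤ ‖b‖ + ‖a - b‖ := by
        have : a = b + (a - b) := by abel
        nth_rewrite 1 [this]; exact norm_add_le _ _
      linarith
    have hbpos : 0 < ‖b‖ := by linarith
    have hbne : b ≠ 0 := norm_pos_iff.1 hbpos
    have hbhalf : ‖a‖ / 2 ≤ ‖b‖ := by linarith
    have hkey : ‖K a - K b‖ ≤ δ / Real.pi * (‖a‖ ^ 2)⁻¹ := by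
      rw [norm_K_sub a b hane hbne]
      have hden : Real.pi * ‖a‖ ^ 2 ≤ 2 * Real.pi * (‖a‖ * ‖b‖) := by
        nlinarith [mul_le_mul_of_nonneg_left hbhalf (by positivity : (0:ℝ) ≤ 2 * Real.pi * ‖a‖)]
      calc ‖a - b‖ / (2 * Real.pi * (‖a‖ * ‖b‖)) ≤ δ / (Real.pi * ‖a‖ ^ 2) := by
            apply div_le_div₀ hδ.le hab (by positivity) hden
        _ = δ / Real.pi * (‖a‖ ^ 2)⁻¹ := by rw [div_mul_eq_div_div, div_eq_mul_inv (δ / Real.pi)]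
    by_cases h2 : ‖a‖ ≤ 1
    · have hm1 : w₁ ∈ closedBall x 1 \ closedBall x (2 * δ) := by
        constructor
        · rw [mem_closedBall, hd1]; exact h2
        · rw [mem_closedBall, hd1]; push_neg; exact h1
      have e1 : ENNReal.ofReal (δ / Real.pi * (‖a‖ ^ 2)⁻¹) ≤ F1 x δ w₁ := by
        rw [F1]
        refine le_trans ?_ le_add_self
        rw [Set.indicator_of_mem hm1, hd1, ENNReal.ofReal_mul (by positivity)]
      calc ENNReal.ofReal ‖K a - K b‖ ≤ ENNReal.ofReal (δ / Real.pi * (‖a‖ ^ 2)⁻¹) :=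
            ENNReal.ofReal_le_ofReal hkey
        _ ≤ F1 x δ w₁ := e1
        _ ≤ _ := le_trans le_self_add le_self_add
    · push_neg at h2
      have hkey2 : ‖K a - K b‖ ≤ δ / Real.pi := by
        have h3 : (‖a‖ ^ 2)⁻¹ ≤ 1 := by
          rw [inv_le_one_iff₀]
          right; nlinarith
        calc ‖K a - K b‖ ≤ δ / Real.pi * (‖a‖ ^ 2)⁻¹ := hkey
          _ ≤ δ / Real.pi * 1 := by
              apply mul_le_mul_of_nonneg_left h3 (by positivity)
          _ = δ / Real.pi := mul_one _
      calc ENNReal.ofReal ‖K a - K b‖ ≤ ENNReal.ofReal (δ / Real.pi) :=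
            ENNReal.ofReal_le_ofReal hkey2
        _ ≤ _ := le_add_self

lemma lintegral_F2 (x : E2) {δ : ℝ} (hδ : 0 < δ) :
    ∫⁻ w, F2 x δ w ≤ ENNReal.ofReal (6 * δ) := by
  unfold F2
  rw [lintegral_indicator measurableSet_closedBall]
  calc ∫⁻ w in closedBall x (3 * δ), ENNReal.ofReal (2 * Real.pi * dist w x)⁻¹
      ≤ ENNReal.ofReal (2 * (3 * δ)) := shell_bound_one x (by positivity)
    _ = ENNReal.ofReal (6 * δ) := by ring_nf

lemma lintegral_F1 (x : E2) {δ : ℝ} (hδ : 0 < δ) (N : ℕ) (hN : 1 ≤ 2 * δ * 2 ^ (N + 1)) :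
    ∫⁻ w, F1 x δ w ≤ ENNReal.ofReal (4 * δ) +
      ENNReal.ofReal (δ / Real.pi) * ((N + 1 : ℕ) * ENNReal.ofReal (4 * Real.pi)) := by
  unfold F1
  rw [lintegral_add_left ((measurable_base x).indicator measurableSet_closedBall)]
  have h1 : ∫⁻ w, (closedBall x (2 * δ)).indicator
      (fun w => ENNReal.ofReal (2 * Real.pi * dist w x)⁻¹) w ≤ ENNReal.ofReal (4 * δ) := by
    rw [lintegral_indicator measurableSet_closedBall]
    calc ∫⁻ w in closedBall x (2 * δ), ENNReal.ofReal (2 * Real.pi * dist w x)⁻¹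
        ≤ ENNReal.ofReal (2 * (2 * δ)) := shell_bound_one x (by positivity)
      _ = ENNReal.ofReal (4 * δ) := by ring_nf
  have h2 : ∫⁻ w, (closedBall x 1 \ closedBall x (2 * δ)).indicator
      (fun w => ENNReal.ofReal (δ / Real.pi) * ENNReal.ofReal ((dist w x) ^ 2)⁻¹) w ≤
      ENNReal.ofReal (δ / Real.pi) * ((N + 1 : ℕ) * ENNReal.ofReal (4 * Real.pi)) := by
    rw [lintegral_indicator (measurableSet_closedBall.diff measurableSet_closedBall),
      lintegral_const_mul _ (measurable_base2 x)]
    exact mul_le_mul_right (shell_bound_two x hδ N hN) _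
  exact add_le_add h1 h2

lemma integral_norm_le (μ : Measure E2) (h : E2 → E2) :
    ∫ z, ‖h z‖ ∂μ ≤ (∫⁻ z, ENNReal.ofReal ‖h z‖ ∂μ).toReal := by
  have h1 := norm_integral_le_lintegral_norm (μ := μ) (f := fun z => ‖h z‖)
  simp only [norm_norm] at h1
  refine le_trans (le_abs_self _) ?_
  rwa [← Real.norm_eq_abs]

end KFlowAux

open KFlowAux Metric

theorem K_flow_difference_L1_log_bound (m : ENNReal) (hm : m < ⊤) :
    ∃ C > 0, ∀ (X₁ X₂ : E2 ≃ₜ E2),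
      MeasurePreserving X₁ volume volume →
      MeasurePreserving X₂ volume volume →
      0 < (⨆ z : E2, ‖X₁ z - X₂ z‖) →
      (⨆ z : E2, ‖X₁ z - X₂ z‖) < Real.exp (-1) →
      ∀ U : Set E2, MeasurableSet U → volume U = m →
      ∀ x : E2,
        ∫ z in U, ‖K (x - X₁ z) - K (x - X₂ z)‖ ≤
          -(C * (⨆ z : E2, ‖X₁ z - X₂ z‖) * Real.log (⨆ z : E2, ‖X₁ z - X₂ z‖)) := by
  have hm' : (0:ℝ) ≤ m.toReal := ENNReal.toReal_nonneg
  refine ⟨23 + m.toReal, by positivity, ?_⟩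
  intro X₁ X₂ hX₁ hX₂ hδpos hδlt U hU hUm x
  set δ := ⨆ z : E2, ‖X₁ z - X₂ z‖ with hδdef
  have hπ := Real.pi_pos
  have hub : ∀ z, ‖X₁ z - X₂ z‖ ≤ δ := by
    intro z
    by_cases hb : BddAbove (Set.range fun z : E2 => ‖X₁ z - X₂ z‖)
    · exact le_ciSup hb z
    · exfalso
      have h0 := Real.iSup_of_not_bddAbove hb
      rw [← hδdef] at h0
      linarith
  have hL : 1 ≤ -Real.log δ := by
    have h1 := Real.log_lt_log hδpos hδlt
    rw [Real.log_exp] at h1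
    linarith
  set L := -Real.log δ with hLdef
  have hlog2 : 0 < Real.log 2 := Real.log_pos one_lt_two
  set N := Nat.floor (L / Real.log 2) with hNdef
  have hNle : (N : ℝ) ≤ L / Real.log 2 := Nat.floor_le (by positivity)
  have hN1 : L / Real.log 2 < (N : ℝ) + 1 := Nat.lt_floor_add_one _
  have hN : 1 ≤ 2 * δ * 2 ^ (N + 1) := by
    have h1 : (2:ℝ) ^ (L / Real.log 2 : ℝ) ≤ 2 ^ (((N + 1 : ℕ) : ℝ)) := by
      apply Real.rpow_le_rpow_of_exponent_le one_le_two
      push_cast; linarith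
    rw [Real.rpow_natCast] at h1
    have h2 : (2:ℝ) ^ (L / Real.log 2 : ℝ) = δ⁻¹ := by
      rw [Real.rpow_def_of_pos two_pos, mul_comm (Real.log 2) (L / Real.log 2),
        div_mul_cancel₀ _ (ne_of_gt hlog2), hLdef, Real.exp_neg, Real.exp_log hδpos]
    rw [h2] at h1
    have h3 : δ * δ⁻¹ = 1 := mul_inv_cancel₀ (ne_of_gt hδpos)
    have h4 : (0:ℝ) < 2 ^ (N + 1) := by positivity
    calc (1:ℝ) = δ * δ⁻¹ := h3.symm
      _ ≤ δ * 2 ^ (N + 1) := mul_le_mul_of_nonneg_left h1 hδpos.le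
      _ ≤ 2 * δ * 2 ^ (N + 1) := by nlinarith
  have hmeasF1 : Measurable fun z : E2 => F1 x δ (X₁ z) :=
    (measurable_F1 x δ).comp X₁.continuous.measurable
  have hmeasF2 : Measurable fun z : E2 => F2 x δ (X₂ z) :=
    (measurable_F2 x δ).comp X₂.continuous.measurable
  have key : ∫⁻ z in U, ENNReal.ofReal ‖K (x - X₁ z) - K (x - X₂ z)‖ ≤
      ENNReal.ofReal ((23 + m.toReal) * δ * L) := by
    calc ∫⁻ z in U, ENNReal.ofReal ‖K (x - X₁ z) - K (x - X₂ z)‖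
        ≤ ∫⁻ z in U, (F1 x δ (X₁ z) + F2 x δ (X₂ z) + ENNReal.ofReal (δ / Real.pi)) :=
          lintegral_mono (fun z => pointwise_bound x (X₁ z) (X₂ z) hδpos (hub z))
      _ = (∫⁻ z in U, (F1 x δ (X₁ z) + F2 x δ (X₂ z))) +
            ∫⁻ _ in U, ENNReal.ofReal (δ / Real.pi) :=
          lintegral_add_right _ measurable_const
      _ = (∫⁻ z in U, F1 x δ (X₁ z)) + (∫⁻ z in U, F2 x δ (X₂ z)) +
            ∫⁻ _ in U, ENNReal.ofReal (δ / Real.pi) := by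
          rw [lintegral_add_right _ hmeasF2]
      _ ≤ (∫⁻ z, F1 x δ (X₁ z)) + (∫⁻ z, F2 x δ (X₂ z)) +
            ENNReal.ofReal (δ / Real.pi) * m := by
          rw [setLIntegral_const, hUm]
          exact add_le_add (add_le_add (setLIntegral_le_lintegral _ _)
            (setLIntegral_le_lintegral _ _)) le_rfl
      _ = (∫⁻ w, F1 x δ w) + (∫⁻ w, F2 x δ w) + ENNReal.ofReal (δ / Real.pi) * m := by
          rw [hX₁.lintegral_comp (measurable_F1 x δ), hX₂.lintegral_comp (measurable_F2 x δ)]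
      _ ≤ (ENNReal.ofReal (4 * δ) +
            ENNReal.ofReal (δ / Real.pi) * ((N + 1 : ℕ) * ENNReal.ofReal (4 * Real.pi))) +
            ENNReal.ofReal (6 * δ) + ENNReal.ofReal (δ / Real.pi) * ENNReal.ofReal m.toReal := by
          refine add_le_add (add_le_add (lintegral_F1 x hδpos N hN) (lintegral_F2 x hδpos))
            (le_of_eq ?_)
          rw [ENNReal.ofReal_toReal hm.ne]
      _ = ENNReal.ofReal (4 * δ + δ / Real.pi * (((N : ℝ) + 1) * (4 * Real.pi)) + 6 * δ +
            δ / Real.pi * m.toReal) := by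
          rw [← ENNReal.ofReal_natCast (N + 1)]
          push_cast
          rw [← ENNReal.ofReal_mul (by positivity), ← ENNReal.ofReal_mul (by positivity),
            ← ENNReal.ofReal_mul (by positivity), ← ENNReal.ofReal_add (by positivity)
              (by positivity), ← ENNReal.ofReal_add (by positivity) (by positivity),
            ← ENNReal.ofReal_add (by positivity) (by positivity)]
      _ ≤ ENNReal.ofReal ((23 + m.toReal) * δ * L) := by
          apply ENNReal.ofReal_le_ofReal
          have hNL : (N : ℝ) + 1 ≤ 3 * L := by
            have h5 : L / Real.log 2 ≤ 2 * L := by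
              rw [div_le_iff₀ hlog2]
              nlinarith [Real.log_two_gt_d9]
            linarith
          have hterm : δ / Real.pi * (((N : ℝ) + 1) * (4 * Real.pi)) = 4 * δ * ((N : ℝ) + 1) := by
            field_simp
          rw [hterm]
          have hπ1 : (1:ℝ) ≤ Real.pi := by linarith [Real.pi_gt_three]
          have hdp : δ / Real.pi ≤ δ := div_le_self hδpos.le hπ1
          have h10 : 10 * δ ≤ 10 * (δ * L) := by nlinarith
          have h12 : 4 * δ * ((N : ℝ) + 1) ≤ 12 * (δ * L) := by nlinarith
          have hmm : δ / Real.pi * m.toReal ≤ δ * L * m.toReal := by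
            have hdl : δ ≤ δ * L := by nlinarith
            exact mul_le_mul_of_nonneg_right (le_trans hdp hdl) hm'
          nlinarith [mul_nonneg hδpos.le (by linarith : (0:ℝ) ≤ L)]
  have hfin : ∫ z in U, ‖K (x - X₁ z) - K (x - X₂ z)‖ ≤ (23 + m.toReal) * δ * L := by
    calc ∫ z in U, ‖K (x - X₁ z) - K (x - X₂ z)‖
        ≤ (∫⁻ z in U, ENNReal.ofReal ‖K (x - X₁ z) - K (x - X₂ z)‖).toReal :=
          integral_norm_le _ _
      _ ≤ (23 + m.toReal) * δ * L :=
          ENNReal.toReal_le_of_le_ofReal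
            (mul_nonneg (mul_nonneg (by positivity) hδpos.le) (by linarith)) key
  calc ∫ z in U, ‖K (x - X₁ z) - K (x - X₂ z)‖ ≤ (23 + m.toReal) * δ * L := hfin
    _ = -((23 + m.toReal) * δ * Real.log δ) := by rw [hLdef]; ring

end
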